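/- Let X be a nonnegative real random variable on a probability space with probability measure P, let α > 1 and C > 0, and assume liminf_{λ → +∞} (-log E[e^{-λX}]) / λ^{1/α} ≥ α / C^{1/α}. Then for every δ ∈ (0,1) there exists x₀ > 0 such that for all x ∈ (0, x₀): P(X ≤ x) ≤ exp(-δ(α-1)/(Cx)^{1/(α-1)}). -/

import Mathlib

open MeasureTheory

theorem stmt_9 {Ω : Type*} [MeasurableSpace Ω] (P : Measure Ω) [IsProbabilityMeasure P]
    (X : Ω → ℝ) (hX : Measurable X) (hX0 : ∀ ω, 0 ≤ X ω)
    (α C : ℝ) (hα : 1 < α) (hC : 0 < C)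
    (h : α / C ^ (1 / α) ≤
      Filter.liminf
        (fun lam : ℝ => -Real.log (∫ ω, Real.exp (-lam * X ω) ∂P) / lam ^ (1 / α))
        Filter.atTop) :
    ∀ δ : ℝ, 0 < δ → δ < 1 → ∃ x₀ > 0, ∀ x : ℝ, 0 < x → x < x₀ →
      (P {ω | X ω ≤ x}).toReal ≤ Real.exp (-δ * (α - 1) / (C * x) ^ (1 / (α - 1))) := by
  intro δ hδ0 hδ1
  have hα0 : (0:ℝ) < α := lt_trans one_pos hα
  have hα0' : α ≠ 0 := ne_of_gt hα0
  have hα1 : (0:ℝ) < α - 1 := by linarith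
  have hα1' : α - 1 ≠ 0 := ne_of_gt hα1
  have hCα : (0:ℝ) < C ^ (1/α) := Real.rpow_pos_of_pos hC _
  set b : ℝ := (1 + δ * (α - 1)) / C ^ (1/α) with hb
  have hb0 : 0 < b := div_pos (by nlinarith) hCα
  have hbK : b < α / C ^ (1/α) := by
    rw [hb]
    exact (div_lt_div_iff_of_pos_right hCα).2 (by nlinarith)
  -- eventually bound from the liminf hypothesis
  have hev : ∀ᶠ lam in Filter.atTop,
      b ≤ -Real.log (∫ ω, Real.exp (-lam * X ω) ∂P) / lam ^ (1/α) := by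
    have hlt : b < Filter.liminf
        (fun lam : ℝ => -Real.log (∫ ω, Real.exp (-lam * X ω) ∂P) / lam ^ (1/α))
        Filter.atTop := lt_of_lt_of_le hbK h
    rw [Filter.liminf_eq] at hlt
    by_cases hS : ({a : ℝ | ∀ᶠ lam in Filter.atTop,
        a ≤ -Real.log (∫ ω, Real.exp (-lam * X ω) ∂P) / lam ^ (1/α)} : Set ℝ).Nonempty
    · obtain ⟨a, ha, hba⟩ := exists_lt_of_lt_csSup hS hlt
      exact ha.mono fun lam hl => le_trans hba.le hl
    · rw [Set.not_nonempty_iff_eq_empty] at hS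
      rw [hS, Real.sSup_empty] at hlt
      linarith
  obtain ⟨Λ, hΛ⟩ := Filter.eventually_atTop.1 hev
  -- choose x₀
  set M : ℝ := max Λ 1 with hM
  have hM0 : 0 < M := lt_of_lt_of_le one_pos (le_max_right _ _)
  set s : ℝ := (M / C) ^ (1/α) with hs
  have hs0 : 0 < s := Real.rpow_pos_of_pos (div_pos hM0 hC) _
  refine ⟨C⁻¹ * s ^ (-(α - 1)), by positivity, fun x hx0 hxlt => ?_⟩
  have hCx0 : 0 < C * x := mul_pos hC hx0
  set t : ℝ := (C * x) ^ (-(1/(α-1))) with ht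
  have ht0 : 0 < t := Real.rpow_pos_of_pos hCx0 _
  -- t > s
  have hts : s < t := by
    have h1 : C * x < s ^ (-(α - 1)) := by
      calc C * x < C * (C⁻¹ * s ^ (-(α - 1))) := by
            exact mul_lt_mul_of_pos_left hxlt hC
        _ = s ^ (-(α - 1)) := by field_simp
    have h2 : (C * x) ^ (1/(α-1)) < (s ^ (-(α-1))) ^ (1/(α-1)) :=
      Real.rpow_lt_rpow hCx0.le h1 (by positivity)
    have h3 : (s ^ (-(α-1))) ^ (1/(α-1)) = s⁻¹ := by
      rw [← Real.rpow_mul hs0.le]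
      rw [show -(α-1) * (1/(α-1)) = -1 by field_simp]
      exact Real.rpow_neg_one s
    rw [h3] at h2
    have h4 : t = ((C * x) ^ (1/(α-1)))⁻¹ := by
      rw [ht, ← Real.rpow_neg_one ((C * x) ^ (1/(α-1))), ← Real.rpow_mul hCx0.le]
      ring_nf
    rw [h4]
    calc s = (s⁻¹)⁻¹ := (inv_inv s).symm
      _ < ((C * x) ^ (1/(α-1)))⁻¹ := by
          apply inv_strictAnti₀ (Real.rpow_pos_of_pos hCx0 _) h2
  set lam : ℝ := C * t ^ α with hlam
  have hlam0 : 0 < lam := mul_pos hC (Real.rpow_pos_of_pos ht0 _)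
  -- lam ≥ Λ
  have hlamM : M < lam := by
    have h1 : s ^ α < t ^ α := Real.rpow_lt_rpow hs0.le hts hα0
    have h2 : s ^ α = M / C := by
      rw [hs, one_div, Real.rpow_inv_rpow (div_pos hM0 hC).le hα0']
    have : M / C < t ^ α := h2 ▸ h1
    calc M = C * (M / C) := by field_simp
      _ < C * t ^ α := mul_lt_mul_of_pos_left this hC
  have hlamΛ : Λ ≤ lam := le_trans (le_max_left _ _) hlamM.le
  -- key algebraic identities
  have htα1 : t ^ (α - 1) = (C * x)⁻¹ := by
    rw [ht, ← Real.rpow_mul hCx0.le]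
    rw [show -(1/(α-1)) * (α-1) = -1 by field_simp]
    exact Real.rpow_neg_one _
  have hlamx : lam * x = t := by
    have htα : t ^ α = t ^ (α - 1) * t := by
      rw [← Real.rpow_add_one (ne_of_gt ht0)]; ring_nf
    rw [hlam, htα, htα1]
    field_simp
  have hlam1α : lam ^ (1/α) = C ^ (1/α) * t := by
    rw [hlam, Real.mul_rpow hC.le (Real.rpow_pos_of_pos ht0 _).le, one_div,
      Real.rpow_rpow_inv ht0.le hα0']
  have hblam : b * lam ^ (1/α) = (1 + δ * (α - 1)) * t := by
    rw [hlam1α, hb]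
    field_simp
  -- integrability and basic facts about the integral
  have hmeas : Measurable fun ω => Real.exp (-lam * X ω) := (hX.const_mul (-lam)).exp
  have hle1 : ∀ ω, Real.exp (-lam * X ω) ≤ 1 := fun ω =>
    Real.exp_le_one_iff.mpr (by nlinarith [hX0 ω])
  have hint : Integrable (fun ω => Real.exp (-lam * X ω)) P := by
    apply Integrable.mono' (integrable_const 1) hmeas.aestronglyMeasurable
    filter_upwards with ω
    rw [Real.norm_eq_abs, abs_of_pos (Real.exp_pos _)]
    exact hle1 ω
  set I : ℝ := ∫ ω, Real.exp (-lam * X ω) ∂P with hI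
  have hI0 : 0 ≤ I := integral_nonneg fun ω => (Real.exp_pos _).le
  -- Laplace transform bound
  have hIle : I ≤ Real.exp (-(b * lam ^ (1/α))) := by
    have hbound : b ≤ -Real.log I / lam ^ (1/α) := hΛ lam hlamΛ
    have hlp : 0 < lam ^ (1/α) := Real.rpow_pos_of_pos hlam0 _
    have h1 : b * lam ^ (1/α) ≤ -Real.log I := by
      rw [le_div_iff₀ hlp] at hbound; linarith [hbound]
    rcases eq_or_lt_of_le hI0 with hI0' | hI0'
    · rw [← hI0']; positivity
    · calc I = Real.exp (Real.log I) := (Real.exp_log hI0').symm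
        _ ≤ Real.exp (-(b * lam ^ (1/α))) := Real.exp_le_exp.2 (by linarith)
  -- Chernoff step
  have hA : MeasurableSet {ω | X ω ≤ x} := measurableSet_le hX measurable_const
  have hcher : (P {ω | X ω ≤ x}).toReal * Real.exp (-lam * x) ≤ I := by
    calc (P {ω | X ω ≤ x}).toReal * Real.exp (-lam * x)
        = ∫ _ω in {ω | X ω ≤ x}, Real.exp (-lam * x) ∂P := by
          rw [setIntegral_const, smul_eq_mul, Measure.real_def]
      _ ≤ ∫ ω in {ω | X ω ≤ x}, Real.exp (-lam * X ω) ∂P := by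
          apply setIntegral_mono_on (integrableOn_const (measure_ne_top _ _) enorm_ne_top)
            hint.integrableOn hA
          intro ω hω
          exact Real.exp_le_exp.2 (by nlinarith [Set.mem_setOf.1 hω])
      _ ≤ I := setIntegral_le_integral hint (ae_of_all _ fun ω => (Real.exp_pos _).le)
  -- conclude
  have hfinal : (P {ω | X ω ≤ x}).toReal ≤ Real.exp (lam * x - b * lam ^ (1/α)) := by
    have hexp0 : 0 < Real.exp (-lam * x) := Real.exp_pos _
    rw [show lam * x - b * lam ^ (1/α) = -(b * lam ^ (1/α)) + lam * x by ring,
      Real.exp_add]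
    calc (P {ω | X ω ≤ x}).toReal
        = (P {ω | X ω ≤ x}).toReal * Real.exp (-lam * x) * Real.exp (lam * x) := by
          rw [mul_assoc, ← Real.exp_add]; simp
      _ ≤ I * Real.exp (lam * x) := mul_le_mul_of_nonneg_right hcher (Real.exp_pos _).le
      _ ≤ Real.exp (-(b * lam ^ (1/α))) * Real.exp (lam * x) :=
          mul_le_mul_of_nonneg_right hIle (Real.exp_pos _).le
  have hexpeq : lam * x - b * lam ^ (1/α) = -δ * (α - 1) / (C * x) ^ (1/(α-1)) := by
    rw [hlamx, hblam]
    have h4 : (C * x) ^ (1/(α-1)) = t⁻¹ := by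
      rw [ht, ← Real.rpow_neg_one ((C * x) ^ (-(1/(α-1)))), ← Real.rpow_mul hCx0.le]
      ring_nf
    rw [h4]
    field_simp
    ring
  rw [← hexpeq]
  exact hfinal
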